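/- Let X be a locally compact Hausdorff space that admits an infinite discrete family of nonempty open sets, and let Y = X ∪ {p} be its one-point compactification. Then p has a countable decreasing local π-base in Y; in particular p has a countable centered local π-base in Y. -/

import Mathlib

open Set Topology Cardinal

universe u

/-- A local π-base at `p`: a family of nonempty open sets such that every open
set containing `p` contains a member of the family. -/
def IsLocalPiBase {X : Type u} [TopologicalSpace X] (p : X) (𝓑 : Set (Set X)) : Prop :=
  (∀ b ∈ 𝓑, IsOpen b ∧ b.Nonempty) ∧
  ∀ U : Set X, IsOpen U → p ∈ U → ∃ b ∈ 𝓑, b ⊆ U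

/-- A family of sets is centered if it has the finite intersection property. -/
def Centered {X : Type u} (𝓑 : Set (Set X)) : Prop :=
  ∀ F : Finset (Set X), F.Nonempty → ↑F ⊆ 𝓑 → (⋂₀ (F : Set (Set X))).Nonempty

/-- A family of sets is linked if any two members meet. -/
def Linked {X : Type u} (𝓑 : Set (Set X)) : Prop :=
  ∀ b₁ ∈ 𝓑, ∀ b₂ ∈ 𝓑, (b₁ ∩ b₂).Nonempty

/-- A decreasing local π-base at `p`, given as a ⊆-decreasing sequence of
nonempty open sets. -/
def IsDecreasingLocalPiBase {X : Type u} [TopologicalSpace X] (p : X) (A : ℕ → Set X) : Prop :=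
  (∀ n, IsOpen (A n) ∧ (A n).Nonempty) ∧
  (∀ n, A (n + 1) ⊆ A n) ∧
  ∀ U : Set X, IsOpen U → p ∈ U → ∃ n, A n ⊆ U

/-- A cellular family: pairwise disjoint nonempty open sets. -/
def IsCellular {X : Type u} [TopologicalSpace X] (𝓒 : Set (Set X)) : Prop :=
  (∀ c ∈ 𝓒, IsOpen c ∧ c.Nonempty) ∧ 𝓒.PairwiseDisjoint id

/-- A weak closed pseudobase at `p`: a family of open sets whose closures
intersect exactly in `{p}`. -/
def IsWeakClosedPseudobase {X : Type u} [TopologicalSpace X] (p : X) (𝓑 : Set (Set X)) : Prop :=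
  (∀ b ∈ 𝓑, IsOpen b) ∧ (⋂ b ∈ 𝓑, closure b) = {p}

/-- A neighborhood base at `p` consisting of open sets containing `p`. -/
def IsNhdBase {X : Type u} [TopologicalSpace X] (p : X) (𝓑 : Set (Set X)) : Prop :=
  (∀ b ∈ 𝓑, IsOpen b ∧ p ∈ b) ∧
  ∀ U : Set X, IsOpen U → p ∈ U → ∃ b ∈ 𝓑, b ⊆ U

/-- A family of sets is discrete if every point has an open neighborhood meeting
at most one member. -/
def DiscreteFamily {X : Type u} [TopologicalSpace X] (𝓒 : Set (Set X)) : Prop :=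
  ∀ x : X, ∃ U : Set X, IsOpen U ∧ x ∈ U ∧ {c ∈ 𝓒 | (c ∩ U).Nonempty}.Subsingleton

/-- if a locally compact Hausdorff space has an infinite discrete
family of nonempty open sets, then the point at infinity of its one-point
compactification has a countable decreasing (hence centered) local π-base. -/
theorem onePoint_infty_has_decreasing_piBase
    {X : Type u} [TopologicalSpace X] [LocallyCompactSpace X] [T2Space X]
    (h : ∃ 𝓒 : Set (Set X), (∀ c ∈ 𝓒, IsOpen c ∧ c.Nonempty) ∧
      DiscreteFamily 𝓒 ∧ 𝓒.Infinite) :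
    (∃ A : ℕ → Set (OnePoint X), IsDecreasingLocalPiBase (OnePoint.infty : OnePoint X) A) ∧
    ∃ 𝓑 : Set (Set (OnePoint X)), 𝓑.Countable ∧
      IsLocalPiBase (OnePoint.infty : OnePoint X) 𝓑 ∧ Centered 𝓑 := by
  obtain ⟨𝓒, hopen, hdisc, hinf⟩ := h
  -- an injective sequence of members of 𝓒
  obtain ⟨e⟩ : Nonempty (ℕ ↪ 𝓒) := ⟨hinf.natEmbedding 𝓒⟩
  set c : ℕ → Set X := fun n => (e n : Set X) with hc
  have hcmem : ∀ n, c n ∈ 𝓒 := fun n => (e n).2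
  have hcinj : Function.Injective c := fun m n hmn => by
    have := e.injective (Subtype.ext hmn); exact this
  -- key finiteness: a compact set meets only finitely many c m
  have key : ∀ K : Set X, IsCompact K →
      {m : ℕ | (c m ∩ K).Nonempty}.Finite := by
    intro K hK
    choose U hUopen hUmem hUss using hdisc
    obtain ⟨t, htK, ht⟩ := hK.elim_nhds_subcover U (fun x _ => (hUopen x).mem_nhds (hUmem x))
    have hsub : {m : ℕ | (c m ∩ K).Nonempty} ⊆ ⋃ x ∈ t, {m : ℕ | (c m ∩ U x).Nonempty} := by
      rintro m ⟨y, hyc, hyK⟩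
      have hy := ht hyK
      simp only [Set.mem_iUnion] at hy ⊢
      obtain ⟨x, hxt, hyU⟩ := hy
      exact ⟨x, hxt, y, hyc, hyU⟩
    refine Set.Finite.subset (Set.Finite.biUnion t.finite_toSet fun x _ => ?_) hsub
    refine Set.Subsingleton.finite ?_
    intro m hm n hn
    have := hUss x ⟨hcmem m, hm⟩ ⟨hcmem n, hn⟩
    exact hcinj this
  -- the decreasing sequence
  set A : ℕ → Set (OnePoint X) := fun n => (↑) '' (⋃ m ∈ {m : ℕ | n ≤ m}, c m) with hA
  have hAntitone : ∀ m n, m ≤ n → A n ⊆ A m := by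
    intro m n hmn
    refine Set.image_mono ?_
    refine Set.biUnion_subset_biUnion_left ?_
    intro k hk; exact le_trans hmn hk
  have hAopen : ∀ n, IsOpen (A n) := by
    intro n
    exact OnePoint.isOpenEmbedding_coe.isOpenMap _
      (isOpen_biUnion fun m _ => (hopen _ (hcmem m)).1)
  have hAne : ∀ n, (A n).Nonempty := by
    intro n
    obtain ⟨x, hx⟩ := (hopen _ (hcmem n)).2
    exact ⟨x, Set.mem_image_of_mem _ (Set.mem_biUnion (le_refl n) hx)⟩
  have hAbase : ∀ U : Set (OnePoint X), IsOpen U → OnePoint.infty ∈ U → ∃ n, A n ⊆ U := by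
    intro U hU hmem
    have hKc : IsCompact (((↑) ⁻¹' U : Set X)ᶜ) :=
      ((OnePoint.isOpen_iff_of_mem hmem).1 hU).2
    obtain ⟨N, hN⟩ := (key _ hKc).bddAbove
    refine ⟨N + 1, ?_⟩
    rintro z ⟨y, hy, rfl⟩
    simp only [Set.mem_iUnion, Set.mem_setOf_eq] at hy
    obtain ⟨m, hm, hym⟩ := hy
    by_contra hzU
    have : m ∈ {m : ℕ | (c m ∩ ((↑) ⁻¹' U : Set X)ᶜ).Nonempty} := ⟨y, hym, hzU⟩
    have := hN this
    omega
  have hdec : IsDecreasingLocalPiBase (OnePoint.infty : OnePoint X) A :=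
    ⟨fun n => ⟨hAopen n, hAne n⟩, fun n => hAntitone n (n + 1) (Nat.le_succ n), hAbase⟩
  refine ⟨⟨A, hdec⟩, Set.range A, Set.countable_range A, ?_, ?_⟩
  · exact ⟨by rintro b ⟨n, rfl⟩; exact ⟨hAopen n, hAne n⟩,
      fun U hU hm => by obtain ⟨n, hn⟩ := hAbase U hU hm; exact ⟨A n, ⟨n, rfl⟩, hn⟩⟩
  · intro F hF hFsub
    have hidx : ∀ b ∈ F, ∃ n, A n = b := fun b hb => hFsub hb
    choose f hf using hidx
    set N : ℕ := F.attach.sup fun b => f b.1 b.2 with hNdef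
    obtain ⟨x, hx⟩ := hAne N
    refine ⟨x, ?_⟩
    rintro b hb
    have hb' : b ∈ F := hb
    have hfN : f b hb' ≤ N := Finset.le_sup (f := fun b => f b.1 b.2)
      (Finset.mem_attach F ⟨b, hb'⟩)
    exact (hf b hb') ▸ hAntitone _ _ hfN hx
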